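/- Let I ⊂ ℝ be a bounded interval and f : I → ℝ∪{±∞} measurable and finite a.e. Call f − t balanced if |λ({f > t}) − λ({f < t})| ≤ λ({f = t}), and let B^f be the set of all such balanced values t. Then B^f equals the quantile set Q_{½(min I + max I)}^{ℓ_f}; in particular B^f is a non-empty compact interval. -/

import Mathlib

open Set MeasureTheory ENNReal

/-- The auxiliary function `ℓ_f(t) = ½(min I + max I + λ({f < t}) − λ({f > t}))`. -/
noncomputable def ell (a b : ℝ) (f : ℝ → EReal) (t : ℝ) : ℝ :=
  (a + b + (volume {x | x ∈ Set.Icc a b ∧ f x < (t : EReal)}).toReal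
    - (volume {x | x ∈ Set.Icc a b ∧ (t : EReal) < f x}).toReal) / 2

/-- The set of balanced values of `f` on `[a,b]`:
`t` with `|λ({f > t}) − λ({f < t})| ≤ λ({f = t})`. -/
noncomputable def Bset (a b : ℝ) (f : ℝ → EReal) : Set ℝ :=
  {t : ℝ | |(volume {x | x ∈ Set.Icc a b ∧ (t : EReal) < f x}).toReal
      - (volume {x | x ∈ Set.Icc a b ∧ f x < (t : EReal)}).toReal|
    ≤ (volume {x | x ∈ Set.Icc a b ∧ f x = (t : EReal)}).toReal}

namespace Stmt6Aux

noncomputable def Lm (a b : ℝ) (f : ℝ → EReal) (t : ℝ) : ℝ≥0∞ :=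
  volume {x | x ∈ Set.Icc a b ∧ f x < (t : EReal)}

noncomputable def Gm (a b : ℝ) (f : ℝ → EReal) (t : ℝ) : ℝ≥0∞ :=
  volume {x | x ∈ Set.Icc a b ∧ (t : EReal) < f x}

noncomputable def Em (a b : ℝ) (f : ℝ → EReal) (t : ℝ) : ℝ≥0∞ :=
  volume {x | x ∈ Set.Icc a b ∧ f x = (t : EReal)}

variable {a b : ℝ} {f : ℝ → EReal}

lemma Lm_le (t : ℝ) : Lm a b f t ≤ ENNReal.ofReal (b - a) := by
  rw [← Real.volume_Icc]
  exact measure_mono (fun x hx => hx.1)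

lemma Gm_le (t : ℝ) : Gm a b f t ≤ ENNReal.ofReal (b - a) := by
  rw [← Real.volume_Icc]
  exact measure_mono (fun x hx => hx.1)

lemma Em_le (t : ℝ) : Em a b f t ≤ ENNReal.ofReal (b - a) := by
  rw [← Real.volume_Icc]
  exact measure_mono (fun x hx => hx.1)

lemma Lm_ne_top (t : ℝ) : Lm a b f t ≠ ⊤ :=
  ((Lm_le t).trans_lt ENNReal.ofReal_lt_top).ne
lemma Gm_ne_top (t : ℝ) : Gm a b f t ≠ ⊤ :=
  ((Gm_le t).trans_lt ENNReal.ofReal_lt_top).ne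
lemma Em_ne_top (t : ℝ) : Em a b f t ≠ ⊤ :=
  ((Em_le t).trans_lt ENNReal.ofReal_lt_top).ne

lemma measL (hmeas : Measurable f) (t : ℝ) :
    MeasurableSet {x | x ∈ Set.Icc a b ∧ f x < (t : EReal)} :=
  measurableSet_Icc.inter (hmeas measurableSet_Iio)

lemma measG (hmeas : Measurable f) (t : ℝ) :
    MeasurableSet {x | x ∈ Set.Icc a b ∧ (t : EReal) < f x} :=
  measurableSet_Icc.inter (hmeas measurableSet_Ioi)

lemma measE (hmeas : Measurable f) (t : ℝ) :
    MeasurableSet {x | x ∈ Set.Icc a b ∧ f x = (t : EReal)} :=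
  measurableSet_Icc.inter (hmeas (measurableSet_singleton _))

lemma sum_eq (hmeas : Measurable f) (t : ℝ) :
    Lm a b f t + Em a b f t + Gm a b f t = ENNReal.ofReal (b - a) := by
  have hdisj1 : Disjoint {x | x ∈ Set.Icc a b ∧ f x < (t : EReal)}
      {x | x ∈ Set.Icc a b ∧ f x = (t : EReal)} := by
    rw [Set.disjoint_left]
    rintro x ⟨_, hlt⟩ ⟨_, heq⟩
    exact absurd heq hlt.ne
  have hdisj2 : Disjoint ({x | x ∈ Set.Icc a b ∧ f x < (t : EReal)}
      ∪ {x | x ∈ Set.Icc a b ∧ f x = (t : EReal)})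
      {x | x ∈ Set.Icc a b ∧ (t : EReal) < f x} := by
    rw [Set.disjoint_left]
    rintro x (⟨_, h⟩ | ⟨_, h⟩) ⟨_, h'⟩
    · exact absurd (h.trans h') (lt_irrefl _)
    · rw [h] at h'; exact absurd h' (lt_irrefl _)
  have hU : {x | x ∈ Set.Icc a b ∧ f x < (t : EReal)}
      ∪ {x | x ∈ Set.Icc a b ∧ f x = (t : EReal)}
      ∪ {x | x ∈ Set.Icc a b ∧ (t : EReal) < f x} = Set.Icc a b := by
    ext x
    constructor
    · rintro ((⟨h, _⟩ | ⟨h, _⟩) | ⟨h, _⟩) <;> exact h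
    · intro hx
      rcases lt_trichotomy (f x) ((t : ℝ) : EReal) with h | h | h
      · exact Or.inl (Or.inl ⟨hx, h⟩)
      · exact Or.inl (Or.inr ⟨hx, h⟩)
      · exact Or.inr ⟨hx, h⟩
  have := measure_union (μ := volume) hdisj2 (measG hmeas t)
  rw [hU] at this
  rw [measure_union (μ := volume) hdisj1 (measE hmeas t)] at this
  rw [Lm, Em, Gm, ← this, Real.volume_Icc]

lemma Lm_mono : Monotone (Lm a b f) := by
  intro s t hst
  apply measure_mono
  rintro x ⟨hx, h⟩
  exact ⟨hx, h.trans_le (EReal.coe_le_coe_iff.mpr hst)⟩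

lemma Gm_anti : Antitone (Gm a b f) := by
  intro s t hst
  apply measure_mono
  rintro x ⟨hx, h⟩
  exact ⟨hx, (EReal.coe_le_coe_iff.mpr hst).trans_lt h⟩

/-- `λ{f ≤ t} ≤ λ{f < s}` for `t < s`. -/
lemma le_Lm (hmeas : Measurable f) (t s : ℝ) (hts : t < s) :
    Lm a b f t + Em a b f t ≤ Lm a b f s := by
  have hdisj : Disjoint {x | x ∈ Set.Icc a b ∧ f x < (t : EReal)}
      {x | x ∈ Set.Icc a b ∧ f x = (t : EReal)} := by
    rw [Set.disjoint_left]
    rintro x ⟨_, hlt⟩ ⟨_, heq⟩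
    exact absurd heq hlt.ne
  rw [Lm, Em, ← measure_union hdisj (measE hmeas t)]
  apply measure_mono
  rintro x (⟨hx, h⟩ | ⟨hx, h⟩)
  · exact ⟨hx, h.trans (EReal.coe_lt_coe_iff.mpr hts)⟩
  · exact ⟨hx, h.trans_lt (EReal.coe_lt_coe_iff.mpr hts)⟩

/-- `λ{f ≥ t} ≤ λ{f > s}` for `s < t`. -/
lemma le_Gm (hmeas : Measurable f) (t s : ℝ) (hst : s < t) :
    Gm a b f t + Em a b f t ≤ Gm a b f s := by
  have hdisj : Disjoint {x | x ∈ Set.Icc a b ∧ (t : EReal) < f x}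
      {x | x ∈ Set.Icc a b ∧ f x = (t : EReal)} := by
    rw [Set.disjoint_left]
    rintro x ⟨_, hlt⟩ ⟨_, heq⟩
    rw [heq] at hlt; exact absurd hlt (lt_irrefl _)
  rw [Gm, Em, ← measure_union hdisj (measE hmeas t)]
  apply measure_mono
  rintro x (⟨hx, h⟩ | ⟨hx, h⟩)
  · exact ⟨hx, (EReal.coe_lt_coe_iff.mpr hst).trans h⟩
  · exact ⟨hx, h ▸ EReal.coe_lt_coe_iff.mpr hst⟩


lemma Lm_iSup (t : ℝ) : Lm a b f t = ⨆ n : ℕ, Lm a b f (t - 1/(n+1)) := by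
  have hmono : Monotone (fun n : ℕ => {x | x ∈ Set.Icc a b ∧ f x < ((t - 1/(n+1) : ℝ) : EReal)}) := by
    intro n m hnm x ⟨hx, h⟩
    refine ⟨hx, h.trans_le (EReal.coe_le_coe_iff.mpr ?_)⟩
    have : 1/((m:ℝ)+1) ≤ 1/((n:ℝ)+1) := by
      apply one_div_le_one_div_of_le (by positivity)
      exact_mod_cast Nat.succ_le_succ hnm
    linarith
  have hU : (⋃ n : ℕ, {x | x ∈ Set.Icc a b ∧ f x < ((t - 1/(n+1) : ℝ) : EReal)})
      = {x | x ∈ Set.Icc a b ∧ f x < (t : EReal)} := by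
    ext x
    simp only [Set.mem_iUnion, Set.mem_setOf_eq]
    constructor
    · rintro ⟨n, hx, h⟩
      refine ⟨hx, h.trans_le (EReal.coe_le_coe_iff.mpr ?_)⟩
      have : (0:ℝ) < 1/((n:ℝ)+1) := by positivity
      linarith
    · rintro ⟨hx, h⟩
      rcases eq_or_ne (f x) ⊥ with hb | hb
      · exact ⟨0, hx, hb ▸ EReal.bot_lt_coe _⟩
      · have ht : f x ≠ ⊤ := fun h' => absurd (h' ▸ h) (by simp)
        have hr : ((f x).toReal : EReal) = f x := EReal.coe_toReal ht hb
        have hrt : (f x).toReal < t := EReal.coe_lt_coe_iff.mp (hr ▸ h)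
        obtain ⟨n, hn⟩ := exists_nat_one_div_lt (sub_pos.mpr hrt)
        refine ⟨n, hx, ?_⟩
        rw [← hr]
        exact EReal.coe_lt_coe_iff.mpr (by push_cast at hn ⊢; linarith)
  rw [Lm, ← hU, hmono.directed_le.measure_iUnion]
  rfl

lemma Gm_iSup (t : ℝ) : Gm a b f t = ⨆ n : ℕ, Gm a b f (t + 1/(n+1)) := by
  have hmono : Monotone (fun n : ℕ => {x | x ∈ Set.Icc a b ∧ ((t + 1/(n+1) : ℝ) : EReal) < f x}) := by
    intro n m hnm x ⟨hx, h⟩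
    refine ⟨hx, lt_of_le_of_lt (EReal.coe_le_coe_iff.mpr ?_) h⟩
    have : 1/((m:ℝ)+1) ≤ 1/((n:ℝ)+1) := by
      apply one_div_le_one_div_of_le (by positivity)
      exact_mod_cast Nat.succ_le_succ hnm
    linarith
  have hU : (⋃ n : ℕ, {x | x ∈ Set.Icc a b ∧ ((t + 1/(n+1) : ℝ) : EReal) < f x})
      = {x | x ∈ Set.Icc a b ∧ (t : EReal) < f x} := by
    ext x
    simp only [Set.mem_iUnion, Set.mem_setOf_eq]
    constructor
    · rintro ⟨n, hx, h⟩
      refine ⟨hx, lt_of_le_of_lt (EReal.coe_le_coe_iff.mpr ?_) h⟩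
      have : (0:ℝ) < 1/((n:ℝ)+1) := by positivity
      linarith
    · rintro ⟨hx, h⟩
      rcases eq_or_ne (f x) ⊤ with hb | hb
      · exact ⟨0, hx, hb ▸ EReal.coe_lt_top _⟩
      · have ht : f x ≠ ⊥ := fun h' => absurd (h' ▸ h) (by simp)
        have hr : ((f x).toReal : EReal) = f x := EReal.coe_toReal hb ht
        have hrt : t < (f x).toReal := EReal.coe_lt_coe_iff.mp (hr ▸ h)
        obtain ⟨n, hn⟩ := exists_nat_one_div_lt (sub_pos.mpr hrt)
        refine ⟨n, hx, ?_⟩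
        rw [← hr]
        exact EReal.coe_lt_coe_iff.mpr (by push_cast at hn ⊢; linarith)
  rw [Gm, ← hU, hmono.directed_le.measure_iUnion]
  rfl

lemma Lm_tendsto_top
    (hfin : volume {x | x ∈ Set.Icc a b ∧ (f x = ⊤ ∨ f x = ⊥)} = 0) :
    ⨆ n : ℕ, Lm a b f n = ENNReal.ofReal (b - a) := by
  have hmono : Monotone (fun n : ℕ => {x | x ∈ Set.Icc a b ∧ f x < ((n:ℝ) : EReal)}) := by
    intro n m hnm x ⟨hx, h⟩
    exact ⟨hx, h.trans_le (EReal.coe_le_coe_iff.mpr (by exact_mod_cast hnm))⟩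
  have key : (⨆ n : ℕ, Lm a b f n) = volume (⋃ n : ℕ, {x | x ∈ Set.Icc a b ∧ f x < ((n:ℝ) : EReal)}) :=
    (hmono.directed_le.measure_iUnion).symm
  rw [key]
  apply le_antisymm
  · rw [← Real.volume_Icc]
    exact measure_mono (by intro x hx; obtain ⟨n, h1, -⟩ := Set.mem_iUnion.mp hx; exact h1)
  · rw [← Real.volume_Icc]
    have hsub : Set.Icc a b ⊆ (⋃ n : ℕ, {x | x ∈ Set.Icc a b ∧ f x < ((n:ℝ) : EReal)})
        ∪ {x | x ∈ Set.Icc a b ∧ (f x = ⊤ ∨ f x = ⊥)} := by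
      intro x hx
      rcases eq_or_ne (f x) ⊤ with ht | ht
      · exact Or.inr ⟨hx, Or.inl ht⟩
      rcases eq_or_ne (f x) ⊥ with hb | hb
      · exact Or.inl (Set.mem_iUnion.mpr ⟨0, hx, hb ▸ EReal.bot_lt_coe _⟩)
      have hr : ((f x).toReal : EReal) = f x := EReal.coe_toReal ht hb
      obtain ⟨n, hn⟩ := exists_nat_gt ((f x).toReal)
      exact Or.inl (Set.mem_iUnion.mpr ⟨n, hx, by rw [← hr]; exact_mod_cast EReal.coe_lt_coe_iff.mpr hn⟩)
    calc volume (Set.Icc a b) ≤ volume _ + volume _ := (measure_mono hsub).trans (measure_union_le _ _)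
      _ = volume (⋃ n : ℕ, {x | x ∈ Set.Icc a b ∧ f x < ((n:ℝ) : EReal)}) := by rw [hfin, add_zero]

lemma Gm_tendsto_bot
    (hfin : volume {x | x ∈ Set.Icc a b ∧ (f x = ⊤ ∨ f x = ⊥)} = 0) :
    ⨆ n : ℕ, Gm a b f (-(n:ℝ)) = ENNReal.ofReal (b - a) := by
  have hmono : Monotone (fun n : ℕ => {x | x ∈ Set.Icc a b ∧ ((-(n:ℝ) : ℝ) : EReal) < f x}) := by
    intro n m hnm x ⟨hx, h⟩
    refine ⟨hx, lt_of_le_of_lt (EReal.coe_le_coe_iff.mpr ?_) h⟩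
    have : (n:ℝ) ≤ (m:ℝ) := by exact_mod_cast hnm
    linarith
  have key : (⨆ n : ℕ, Gm a b f (-(n:ℝ))) = volume (⋃ n : ℕ, {x | x ∈ Set.Icc a b ∧ ((-(n:ℝ) : ℝ) : EReal) < f x}) :=
    (hmono.directed_le.measure_iUnion).symm
  rw [key]
  apply le_antisymm
  · rw [← Real.volume_Icc]
    exact measure_mono (by intro x hx; obtain ⟨n, h1, -⟩ := Set.mem_iUnion.mp hx; exact h1)
  · rw [← Real.volume_Icc]
    have hsub : Set.Icc a b ⊆ (⋃ n : ℕ, {x | x ∈ Set.Icc a b ∧ ((-(n:ℝ) : ℝ) : EReal) < f x})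
        ∪ {x | x ∈ Set.Icc a b ∧ (f x = ⊤ ∨ f x = ⊥)} := by
      intro x hx
      rcases eq_or_ne (f x) ⊥ with ht | ht
      · exact Or.inr ⟨hx, Or.inr ht⟩
      rcases eq_or_ne (f x) ⊤ with hb | hb
      · exact Or.inl (Set.mem_iUnion.mpr ⟨0, hx, hb ▸ EReal.coe_lt_top _⟩)
      have hr : ((f x).toReal : EReal) = f x := EReal.coe_toReal hb ht
      obtain ⟨n, hn⟩ := exists_nat_gt (-(f x).toReal)
      refine Or.inl (Set.mem_iUnion.mpr ⟨n, hx, ?_⟩)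
      rw [← hr]
      exact EReal.coe_lt_coe_iff.mpr (by linarith)
    calc volume (Set.Icc a b) ≤ volume _ + volume _ := (measure_mono hsub).trans (measure_union_le _ _)
      _ = volume (⋃ n : ℕ, {x | x ∈ Set.Icc a b ∧ ((-(n:ℝ) : ℝ) : EReal) < f x}) := by rw [hfin, add_zero]

end Stmt6Aux

open Stmt6Aux in
theorem stmt6 (a b : ℝ) (hab : a < b) (f : ℝ → EReal) (hmeas : Measurable f)
    (hfin : volume {x | x ∈ Set.Icc a b ∧ (f x = ⊤ ∨ f x = ⊥)} = 0) :
    Bset a b f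
        = Set.Icc (sInf {t : ℝ | (a + b) / 2 ≤ ell a b f t})
            (sSup {t : ℝ | ell a b f t ≤ (a + b) / 2}) ∧
      (Bset a b f).Nonempty ∧ IsCompact (Bset a b f) := by
  set lr : ℝ → ℝ := fun t => (Lm a b f t).toReal with hlrdef
  set gr : ℝ → ℝ := fun t => (Gm a b f t).toReal with hgrdef
  set er : ℝ → ℝ := fun t => (Em a b f t).toReal with herdef
  have hell : ∀ t, ell a b f t = (a + b + lr t - gr t) / 2 := fun t => rfl
  have hBmem : ∀ t, t ∈ Bset a b f ↔ |gr t - lr t| ≤ er t := fun t => Iff.rfl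
  have hsum : ∀ t, lr t + er t + gr t = b - a := by
    intro t
    have h := congrArg ENNReal.toReal (sum_eq (a := a) (b := b) hmeas t)
    rwa [ENNReal.toReal_add (ENNReal.add_ne_top.mpr ⟨Lm_ne_top t, Em_ne_top t⟩) (Gm_ne_top t),
      ENNReal.toReal_add (Lm_ne_top t) (Em_ne_top t),
      ENNReal.toReal_ofReal (by linarith)] at h
  have hernn : ∀ t, 0 ≤ er t := fun t => ENNReal.toReal_nonneg
  have hle_sum : ∀ t, lr t + gr t ≤ b - a := fun t => by have := hsum t; have := hernn t; linarith
  have hlmono : ∀ s t, s ≤ t → lr s ≤ lr t := fun s t h =>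
    ENNReal.toReal_mono (Lm_ne_top t) (Lm_mono h)
  have hganti : ∀ s t, s ≤ t → gr t ≤ gr s := fun s t h =>
    ENNReal.toReal_mono (Gm_ne_top s) (Gm_anti h)
  set Sm : Set ℝ := {t | gr t ≤ lr t} with hSmdef
  set Sp : Set ℝ := {t | lr t ≤ gr t} with hSpdef
  have hAm : {t : ℝ | (a + b) / 2 ≤ ell a b f t} = Sm := by
    ext t
    rw [Set.mem_setOf_eq, hell t, hSmdef, Set.mem_setOf_eq]
    constructor <;> intro h <;> linarith
  have hAp : {t : ℝ | ell a b f t ≤ (a + b) / 2} = Sp := by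
    ext t
    rw [Set.mem_setOf_eq, hell t, hSpdef, Set.mem_setOf_eq]
    constructor <;> intro h <;> linarith
  -- a witness where lr is large
  obtain ⟨n₀, hn₀⟩ : ∃ n : ℕ, (b - a) / 2 < lr n := by
    have hV : ENNReal.ofReal ((b - a) / 2) < ⨆ n : ℕ, Lm a b f n := by
      rw [Lm_tendsto_top hfin]
      exact (ENNReal.ofReal_lt_ofReal_iff (by linarith)).mpr (by linarith)
    obtain ⟨n, hn⟩ := lt_iSup_iff.mp hV
    exact ⟨n, (ENNReal.ofReal_lt_iff_lt_toReal (by linarith) (Lm_ne_top _)).mp hn⟩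
  -- a witness where gr is large
  obtain ⟨m₀, hm₀⟩ : ∃ m : ℕ, (b - a) / 2 < gr (-(m : ℝ)) := by
    have hV : ENNReal.ofReal ((b - a) / 2) < ⨆ n : ℕ, Gm a b f (-(n : ℝ)) := by
      rw [Gm_tendsto_bot hfin]
      exact (ENNReal.ofReal_lt_ofReal_iff (by linarith)).mpr (by linarith)
    obtain ⟨m, hm⟩ := lt_iSup_iff.mp hV
    exact ⟨m, (ENNReal.ofReal_lt_iff_lt_toReal (by linarith) (Gm_ne_top _)).mp hm⟩
  have hSmne : Sm.Nonempty := by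
    refine ⟨(n₀ : ℝ), ?_⟩
    have := hle_sum (n₀ : ℝ)
    simp only [hSmdef, Set.mem_setOf_eq]
    linarith
  have hSpne : Sp.Nonempty := by
    refine ⟨-(m₀ : ℝ), ?_⟩
    have := hle_sum (-(m₀ : ℝ))
    simp only [hSpdef, Set.mem_setOf_eq]
    linarith
  have hSmbdd : BddBelow Sm := by
    refine ⟨-(m₀ : ℝ), fun t ht => ?_⟩
    by_contra h
    push_neg at h
    have h1 : (b - a) / 2 < gr t := lt_of_lt_of_le hm₀ (hganti t _ h.le)
    have h2 := hle_sum t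
    have : lr t < gr t := by linarith
    exact absurd ht (by simp only [hSmdef, Set.mem_setOf_eq]; linarith)
  have hSpbdd : BddAbove Sp := by
    refine ⟨(n₀ : ℝ), fun t ht => ?_⟩
    by_contra h
    push_neg at h
    have h1 : (b - a) / 2 < lr t := lt_of_lt_of_le hn₀ (hlmono _ t h.le)
    have h2 := hle_sum t
    exact absurd ht (by simp only [hSpdef, Set.mem_setOf_eq]; linarith)
  set tm : ℝ := sInf Sm with htmdef
  set tp : ℝ := sSup Sp with htpdef
  have h_lt_tm : ∀ t, t < tm → lr t < gr t := by
    intro t ht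
    by_contra h
    push_neg at h
    exact absurd (csInf_le hSmbdd (by simpa [hSmdef] using h)) (not_le.mpr ht)
  have h_gt_tp : ∀ t, tp < t → gr t < lr t := by
    intro t ht
    by_contra h
    push_neg at h
    exact absurd (le_csSup hSpbdd (by simpa [hSpdef] using h)) (not_le.mpr ht)
  have htmtp : tm ≤ tp := by
    by_contra h
    push_neg at h
    have h1 : tp < (tp + tm) / 2 := by linarith
    have h2 : (tp + tm) / 2 < tm := by linarith
    exact absurd (h_lt_tm _ h2) (not_lt.mpr (h_gt_tp _ h1).le)
  have claimL : ∀ t, t ≤ tp → lr t ≤ (b - a) / 2 := by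
    have first : ∀ s, s < tp → lr s ≤ (b - a) / 2 := by
      intro s hs
      obtain ⟨u, huS, hsu⟩ := exists_lt_of_lt_csSup hSpne hs
      have h1 : lr u ≤ gr u := huS
      have h2 := hle_sum u
      exact (hlmono _ _ hsu.le).trans (by linarith)
    intro t ht
    rcases ht.lt_or_eq with h | h
    · exact first t h
    · subst h
      have hkey : Lm a b f tp ≤ ENNReal.ofReal ((b - a) / 2) := by
        rw [Lm_iSup tp]
        apply iSup_le
        intro n
        have hpos : (0:ℝ) < 1 / ((n:ℝ) + 1) := by positivity
        have := first (tp - 1 / ((n:ℝ) + 1)) (by linarith)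
        exact (ENNReal.le_ofReal_iff_toReal_le (Lm_ne_top _) (by linarith)).mpr this
      exact ENNReal.toReal_le_of_le_ofReal (by linarith) hkey
  have claimG : ∀ t, tm ≤ t → gr t ≤ (b - a) / 2 := by
    have first : ∀ s, tm < s → gr s ≤ (b - a) / 2 := by
      intro s hs
      obtain ⟨u, huS, hus⟩ := exists_lt_of_csInf_lt hSmne hs
      have h1 : gr u ≤ lr u := huS
      have h2 := hle_sum u
      exact (hganti _ _ hus.le).trans (by linarith)
    intro t ht
    rcases ht.lt_or_eq with h | h
    · exact first t h
    · subst h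
      have hkey : Gm a b f tm ≤ ENNReal.ofReal ((b - a) / 2) := by
        rw [Gm_iSup tm]
        apply iSup_le
        intro n
        have hpos : (0:ℝ) < 1 / ((n:ℝ) + 1) := by positivity
        have := first (tm + 1 / ((n:ℝ) + 1)) (by linarith)
        exact (ENNReal.le_ofReal_iff_toReal_le (Gm_ne_top _) (by linarith)).mpr this
      exact ENNReal.toReal_le_of_le_ofReal (by linarith) hkey
  have hmain : Bset a b f = Set.Icc tm tp := by
    ext t
    rw [hBmem t, Set.mem_Icc]
    constructor
    · intro hB
      constructor
      · by_contra h
        push_neg at h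
        set u : ℝ := (t + tm) / 2 with hudef
        have htu : t < u := by rw [hudef]; linarith
        have hutm : u < tm := by rw [hudef]; linarith
        have hk : lr t + er t ≤ lr u := by
          have h1 := le_Lm (a := a) (b := b) hmeas t u htu
          have h2 := ENNReal.toReal_mono (Lm_ne_top u) h1
          rwa [ENNReal.toReal_add (Lm_ne_top t) (Em_ne_top t)] at h2
        have h3 := h_lt_tm u hutm
        have h4 := hganti t u htu.le
        have h5 : gr t - lr t ≤ er t := (abs_le.mp hB).2
        linarith
      · by_contra h
        push_neg at h
        set u : ℝ := (tp + t) / 2 with hudef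
        have hut : u < t := by rw [hudef]; linarith
        have htpu : tp < u := by rw [hudef]; linarith
        have hk : gr t + er t ≤ gr u := by
          have h1 := le_Gm (a := a) (b := b) hmeas t u hut
          have h2 := ENNReal.toReal_mono (Gm_ne_top u) h1
          rwa [ENNReal.toReal_add (Gm_ne_top t) (Em_ne_top t)] at h2
        have h3 := h_gt_tp u htpu
        have h4 := hlmono u t hut.le
        have h5 : -(er t) ≤ gr t - lr t := (abs_le.mp hB).1
        linarith
    · rintro ⟨h1, h2⟩
      have hl := claimL t h2
      have hg := claimG t h1
      have hs := hsum t
      rw [abs_le]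
      constructor <;> linarith
  refine ⟨?_, ?_, ?_⟩
  · rw [hAm, hAp, ← htmdef, ← htpdef, hmain]
  · rw [hmain]; exact ⟨tm, Set.left_mem_Icc.mpr htmtp⟩
  · rw [hmain]; exact isCompact_Icc
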